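/- Let P be a symmetric positive definite real n×n matrix with eigenvalues λ₁,…,λₙ, and let λ_min and λ_max be the smallest and largest eigenvalues. Then the function g(α) = max over 1 ≤ i ≤ n of |α − λᵢ|/(α + λᵢ), defined for α > 0, is minimized at α* = √(λ_min λ_max); that is, g(√(λ_min λ_max)) ≤ g(α) for every α > 0. -/
import Mathlib


open Matrix

/-- For a symmetric positive definite `P` with eigenvalues `λᵢ`, the function
`g(α) = max_i |α − λᵢ|/(α + λᵢ)` (for `α > 0`) is minimized at
`α* = √(λ_min λ_max)`. -/
theorem optimal_hss_parameter (n : ℕ) (hn : 0 < n)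
    (P : Matrix (Fin n) (Fin n) ℝ) (hP : P.PosDef) :
    ∀ α : ℝ, 0 < α →
      (⨆ i : Fin n,
          |Real.sqrt ((⨅ j : Fin n, hP.1.eigenvalues j) * (⨆ j : Fin n, hP.1.eigenvalues j))
              - hP.1.eigenvalues i| /
            (Real.sqrt ((⨅ j : Fin n, hP.1.eigenvalues j) * (⨆ j : Fin n, hP.1.eigenvalues j))
              + hP.1.eigenvalues i))
        ≤ ⨆ i : Fin n, |α - hP.1.eigenvalues i| / (α + hP.1.eigenvalues i) := by
  intro α hα
  haveI : Nonempty (Fin n) := ⟨⟨0, hn⟩⟩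
  set e := hP.1.eigenvalues with he
  have hepos : ∀ i, 0 < e i := hP.eigenvalues_pos
  set m := ⨅ j, e j with hm
  set M := ⨆ j, e j with hM
  have hmle : ∀ i, m ≤ e i := fun i => ciInf_le (Set.Finite.bddBelow (Set.finite_range e)) i
  have hleM : ∀ i, e i ≤ M := fun i => le_ciSup (Set.Finite.bddAbove (Set.finite_range e)) i
  obtain ⟨i0, hi0⟩ : ∃ i, e i = m := exists_eq_ciInf_of_finite
  obtain ⟨i1, hi1⟩ : ∃ i, e i = M := exists_eq_ciSup_of_finite
  have hm0 : 0 < m := hi0 ▸ hepos i0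
  have hM0 : 0 < M := hi1 ▸ hepos i1
  set s := Real.sqrt (m * M) with hs
  have hs0 : 0 < s := Real.sqrt_pos.mpr (mul_pos hm0 hM0)
  have hs2 : s ^ 2 = m * M := Real.sq_sqrt (le_of_lt (mul_pos hm0 hM0))
  have hms : m ≤ s := by
    have := Real.sqrt_le_sqrt (by nlinarith [hmle i1, hi1] : m * m ≤ m * M)
    rwa [show m * m = m ^ 2 by ring, Real.sqrt_sq hm0.le] at this
  have hsM : s ≤ M := by
    have := Real.sqrt_le_sqrt (by nlinarith [hmle i1, hi1] : m * M ≤ M * M)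
    rwa [show M * M = M ^ 2 by ring, Real.sqrt_sq hM0.le] at this
  set t := (s - m) / (s + m) with ht
  have htM : (M - s) / (M + s) = t := by
    rw [ht, div_eq_div_iff (by linarith) (by linarith)]
    nlinarith [hs2]
  -- Step A : LHS ≤ t
  have stepA : (⨆ i, |s - e i| / (s + e i)) ≤ t := by
    apply ciSup_le
    intro i
    have hpos : 0 < s + e i := by linarith [hepos i]
    rcases le_total (e i) s with h | h
    · rw [abs_of_nonneg (by linarith)]
      rw [ht, div_le_div_iff₀ hpos (by linarith)]
      nlinarith [hmle i]
    · rw [abs_of_nonpos (by linarith), neg_sub]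
      rw [← htM, div_le_div_iff₀ hpos (by linarith)]
      nlinarith [hleM i]
  refine stepA.trans ?_
  -- Step B : t ≤ RHS
  have hbdd : BddAbove (Set.range fun i => |α - e i| / (α + e i)) :=
    Set.Finite.bddAbove (Set.finite_range _)
  rcases le_total α s with h | h
  · have : t ≤ |α - e i1| / (α + e i1) := by
      rw [hi1, abs_of_nonpos (by linarith), neg_sub, ← htM,
        div_le_div_iff₀ (by linarith) (by linarith)]
      nlinarith
    exact this.trans (le_ciSup hbdd i1)
  · have : t ≤ |α - e i0| / (α + e i0) := by
      rw [hi0, abs_of_nonneg (by linarith), ht,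
        div_le_div_iff₀ (by linarith) (by linarith)]
      nlinarith
    exact this.trans (le_ciSup hbdd i0)
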